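/- Let $F$ be the free group on two generators $s, t$ (equivalently, the Artin group on $X = \{s,t\}$ with $m(s,t) = \infty$), and let $M$ be the submonoid of $F$ generated by $\{s,t\}$. Then for every $m \geq 1$, the element $(st^{-1})^m$ satisfies $d_M(e, (st^{-1})^m) = 2m$, where $d_M$ is the monoid word metric; in particular, the monoid Cayley graph of $F$ has infinite diameter. -/

import Mathlib

/-- The alternating product `x y x y ⋯` of length `n` in the free group, starting with `x`. -/
def altProd {X : Type*} : ℕ → X → X → FreeGroup X
  | 0, _, _ => 1
  | n + 1, x, y => FreeGroup.of x * altProd n y x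

/-- The Artin relations associated to a labelling `m : X → X → ℕ∞` (label `⊤` = no relation):
for each pair `x ≠ y` with finite label `k`, the relator `(xyx⋯)(yxy⋯)⁻¹` (both of length `k`). -/
def artinRels {X : Type*} (m : X → X → ℕ∞) : Set (FreeGroup X) :=
  { r | ∃ (x y : X) (k : ℕ), x ≠ y ∧ m x y = (k : ℕ∞) ∧
      r = altProd k x y * (altProd k y x)⁻¹ }

/-- The Artin group of the labelled graph encoded by `m`. -/
abbrev ArtinGroup {X : Type*} (m : X → X → ℕ∞) : Type _ := PresentedGroup (artinRels m)

/-- The standard generators of the Artin group. -/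
def artinGen {X : Type*} (m : X → X → ℕ∞) (x : X) : ArtinGroup m := PresentedGroup.of x

/-- The Artin monoid: the submonoid of the Artin group generated by the standard generators. -/
def artinMonoid {X : Type*} (m : X → X → ℕ∞) : Submonoid (ArtinGroup m) :=
  Submonoid.closure (Set.range (artinGen m))

/-- The monoid word metric on a group `G` relative to a submonoid `M`: `monoidDist M g h` is the
least `n` such that `g⁻¹ * h` is a product of `n` elements each lying in `M` or `M⁻¹`. -/
noncomputable def monoidDist {G : Type*} [Group G] (M : Submonoid G) (g h : G) : ℕ :=
  sInf { n : ℕ | ∃ l : List G, l.length = n ∧ (∀ a ∈ l, a ∈ M ∨ a⁻¹ ∈ M) ∧ g⁻¹ * h = l.prod }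

/-- A word over `X`: a list of letters `x^ε`, where `ε = true` denotes the positive letter `x`
and `ε = false` the negative letter `x⁻¹`. -/
abbrev Word (X : Type*) := List (X × Bool)

/-- The element of `G` represented by a word over `X`, given `f : X → G`. -/
def evalWord {X G : Type*} [Group G] (f : X → G) (w : Word X) : G :=
  (w.map (fun p => if p.2 then f p.1 else (f p.1)⁻¹)).prod

/-- A word is positive if all its letters are positive. -/
def IsPosWord {X : Type*} (w : Word X) : Prop := ∀ p ∈ w, p.2 = true

/-- A word is negative if all its letters are negative. -/
def IsNegWord {X : Type*} (w : Word X) : Prop := ∀ p ∈ w, p.2 = false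

/-- A word is geodesic if no strictly shorter word represents the same element of `G`. -/
def IsGeodesic {X G : Type*} [Group G] (f : X → G) (w : Word X) : Prop :=
  ∀ v : Word X, evalWord f v = evalWord f w → w.length ≤ v.length

/-- `(u, x)` is a blocking pair if for every word `w` such that `w ++ u` is geodesic,
the word `w ++ u ++ [x]` is also geodesic. -/
def BlockingPair {X G : Type*} [Group G] (f : X → G) (u : Word X) (x : X × Bool) : Prop :=
  ∀ w : Word X, IsGeodesic f (w ++ u) → IsGeodesic f (w ++ u ++ [x])

/-- An alternating blocking sequence `(α n)` (indexed from `n = 1`; the value `α 0` is ignored):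
each `α n` is nonempty, positive for odd `n` and negative for even `n`, and every letter `x`
of `α n` is immediately preceded, within `α (n-1) ++ α n` (with `α 0` read as the empty word),
by a subword `u` such that `(u, x)` is a blocking pair. -/
def IsAltBlockingSeq {X G : Type*} [Group G] (f : X → G) (α : ℕ → Word X) : Prop :=
  (∀ n, 1 ≤ n → α n ≠ []) ∧
  (∀ n, 1 ≤ n → Odd n → IsPosWord (α n)) ∧
  (∀ n, 1 ≤ n → Even n → IsNegWord (α n)) ∧
  (∀ n, 1 ≤ n → ∀ p x s, α n = p ++ x :: s →
    ∃ u : Word X, u <:+ ((if n = 1 then ([] : Word X) else α (n - 1)) ++ p) ∧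
      BlockingPair f u x)

/-- `u` is the longest positive (`ε = true`) resp. negative (`ε = false`) proper suffix of `w`. -/
def IsLongestSignedProperSuffix {X : Type*} (ε : Bool) (w u : Word X) : Prop :=
  u <:+ w ∧ u ≠ w ∧ (∀ p ∈ u, p.2 = ε) ∧
    ∀ v : Word X, v <:+ w → v ≠ w → (∀ p ∈ v, p.2 = ε) → v.length ≤ u.length

/-- Preserved positive (`ε = true`) resp. negative (`ε = false`) suffixes: whenever `w` is a
geodesic word ending in a letter of sign `ε`, `u` is the longest proper suffix of `w` of sign `ε`,
and `a` is a generator, the element represented by `a^ε · w` admits a geodesic representative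
having `u` as a suffix. -/
def PreservedSignSuffixes {X G : Type*} [Group G] (ε : Bool) (f : X → G) : Prop :=
  ∀ (w : Word X) (y : X), IsGeodesic f w → w.getLast? = some (y, ε) →
    ∀ u : Word X, IsLongestSignedProperSuffix ε w u →
    ∀ a : X, ∃ w' : Word X, IsGeodesic f w' ∧
      evalWord f w' = evalWord f ((a, ε) :: w) ∧ u <:+ w'

/-- Preserved signed suffixes: both preserved positive and preserved negative suffixes. -/
def PreservedSignedSuffixes {X G : Type*} [Group G] (f : X → G) : Prop :=
  PreservedSignSuffixes true f ∧ PreservedSignSuffixes false f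

namespace MonoidDistAux
open FreeGroup

/-- Number of maximal constant-sign blocks in a word. -/
def blocks : List (Bool × Bool) → ℕ
  | [] => 0
  | [_] => 1
  | a :: b :: l => (if a.2 = b.2 then 0 else 1) + blocks (b :: l)

lemma blocks_le_cons (a : Bool × Bool) (l : List (Bool × Bool)) :
    blocks l ≤ blocks (a :: l) := by
  cases l with
  | nil => simp [blocks]
  | cons b t => simp only [blocks]; omega

/-- Penalty: 0 if the word starts with sign `s`, else 1. -/
def pen (s : Bool) : List (Bool × Bool) → ℕ
  | [] => 1
  | b :: _ => if b.2 = s then 0 else 1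

lemma pen_le_one (s : Bool) (l : List (Bool × Bool)) : pen s l ≤ 1 := by
  cases l with
  | nil => simp [pen]
  | cons b t => simp only [pen]; split <;> omega

/-- Core step: left multiplication by a single letter of sign `s` does not increase
`blocks + pen s`. -/
lemma core (s x : Bool) (g : FreeGroup Bool) :
    blocks ((mk [(x, s)] * g).toWord) + pen s ((mk [(x, s)] * g).toWord) ≤
      blocks g.toWord + pen s g.toWord := by
  conv_lhs => rw [← mk_toWord (x := g)]
  rw [mul_mk, toWord_mk, List.singleton_append]
  have hred : reduce ((x, s) :: g.toWord) =
      List.casesOn (reduce g.toWord) [(x, s)] fun hd tl =>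
        if (x, s).1 = hd.1 ∧ (x, s).2 = !hd.2 then tl else (x, s) :: hd :: tl :=
    reduce.cons _
  rw [reduce_toWord] at hred
  cases hw : g.toWord with
  | nil => rw [hw] at hred; simp [hred, blocks, pen]
  | cons b t =>
    rw [hw] at hred
    by_cases hc : x = b.1 ∧ s = !b.2
    · rw [show (List.casesOn (b :: t) [(x, s)] fun hd tl =>
          if (x, s).1 = hd.1 ∧ (x, s).2 = !hd.2 then tl else (x, s) :: hd :: tl)
          = if (x, s).1 = b.1 ∧ (x, s).2 = !b.2 then t else (x, s) :: b :: t from rfl,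
        if_pos hc] at hred
      rw [hred]
      have h1 : blocks t ≤ blocks (b :: t) := blocks_le_cons b t
      have h2 : pen s t ≤ 1 := pen_le_one s t
      have h3 : pen s (b :: t) = 1 := by
        simp only [pen]; rw [hc.2]; simp
      omega
    · rw [show (List.casesOn (b :: t) [(x, s)] fun hd tl =>
          if (x, s).1 = hd.1 ∧ (x, s).2 = !hd.2 then tl else (x, s) :: hd :: tl)
          = if (x, s).1 = b.1 ∧ (x, s).2 = !b.2 then t else (x, s) :: b :: t from rfl,
        if_neg hc] at hred
      rw [hred]
      simp only [blocks, pen]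
      by_cases hsb : s = b.2
      · simp [hsb]
      · have hbs : ¬ (b.2 = s) := fun h => hsb h.symm
        simp [hsb, hbs]
        omega

abbrev M : Submonoid (FreeGroup Bool) :=
  Submonoid.closure (Set.range (FreeGroup.of : Bool → FreeGroup Bool))

lemma pos_step (a : FreeGroup Bool) (ha : a ∈ M) (g : FreeGroup Bool) :
    blocks ((a * g).toWord) + pen true ((a * g).toWord) ≤
      blocks g.toWord + pen true g.toWord := by
  induction ha using Submonoid.closure_induction generalizing g with
  | one => simp
  | mul u v hu hv ihu ihv => rw [mul_assoc]; exact le_trans (ihu _) (ihv g)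
  | mem u hu =>
      obtain ⟨x, rfl⟩ := hu
      have h : FreeGroup.of x = mk [(x, true)] := rfl
      rw [h]
      exact core true x g

lemma neg_step (a : FreeGroup Bool) (ha : a⁻¹ ∈ M) (g : FreeGroup Bool) :
    blocks ((a * g).toWord) + pen false ((a * g).toWord) ≤
      blocks g.toWord + pen false g.toWord := by
  have key : ∀ m ∈ M, ∀ g : FreeGroup Bool,
      blocks ((m⁻¹ * g).toWord) + pen false ((m⁻¹ * g).toWord) ≤
        blocks g.toWord + pen false g.toWord := by
    intro m hm
    induction hm using Submonoid.closure_induction with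
    | one => simp
    | mul u v hu hv ihu ihv =>
        intro g
        rw [mul_inv_rev, mul_assoc]
        exact le_trans (ihv _) (ihu g)
    | mem u hu =>
        intro g
        obtain ⟨x, rfl⟩ := hu
        have h : (FreeGroup.of x)⁻¹ = mk [(x, false)] := by
          have h0 : FreeGroup.of x = mk [(x, true)] := rfl
          rw [h0, inv_mk]; rfl
        rw [h]
        exact core false x g
  have := key a⁻¹ ha g
  rwa [inv_inv] at this

lemma step (a : FreeGroup Bool) (ha : a ∈ M ∨ a⁻¹ ∈ M) (g : FreeGroup Bool) :
    blocks ((a * g).toWord) ≤ blocks g.toWord + 1 := by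
  rcases ha with ha | ha
  · have := pos_step a ha g
    have h1 := pen_le_one true g.toWord
    omega
  · have := neg_step a ha g
    have h1 := pen_le_one false g.toWord
    omega

lemma blocks_prod (l : List (FreeGroup Bool)) (hl : ∀ a ∈ l, a ∈ M ∨ a⁻¹ ∈ M) :
    blocks (l.prod.toWord) ≤ l.length := by
  induction l with
  | nil => simp [blocks, toWord_one]
  | cons a t ih =>
      rw [List.prod_cons]
      have h := step a (hl a List.mem_cons_self) t.prod
      have ht := ih (fun b hb => hl b (List.mem_cons_of_mem a hb))
      simp only [List.length_cons]
      omega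

/-- The alternating word of length `2k`. -/
def W : ℕ → List (Bool × Bool)
  | 0 => []
  | k + 1 => (true, true) :: (false, false) :: W k

lemma W_head (k : ℕ) (b : Bool × Bool) (t : List (Bool × Bool)) (hw : W k = b :: t) :
    b = (true, true) := by
  cases k with
  | zero => simp [W] at hw
  | succ m =>
      simp only [W] at hw
      exact (List.cons.injEq _ _ _ _ ▸ hw).1.symm

lemma reduce_W (k : ℕ) : reduce (W k) = W k := by
  induction k with
  | zero => rfl
  | succ k ih =>
      show reduce ((true, true) :: (false, false) :: W k) =
        (true, true) :: (false, false) :: W k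
      rw [reduce.cons, reduce.cons, ih]
      cases hw : W k with
      | nil => simp
      | cons b t =>
          have hb := W_head k b t hw
          subst hb
          simp

lemma blocks_W (k : ℕ) : blocks (W k) = 2 * k := by
  induction k with
  | zero => rfl
  | succ k ih =>
      show blocks ((true, true) :: (false, false) :: W k) = 2 * (k + 1)
      have h1 : blocks ((true, true) :: (false, false) :: W k) =
          blocks ((false, false) :: W k) + 1 := by
        simp [blocks]
        omega
      have h2 : blocks ((false, false) :: W k) = blocks (W k) + 1 := by
        cases hw : W k with
        | nil => simp [blocks]
        | cons b t =>
            have hb := W_head k b t hw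
            subst hb
            simp [blocks]
            omega
      rw [h1, h2, ih]
      ring

lemma pow_eq_mk_W (k : ℕ) :
    (FreeGroup.of true * (FreeGroup.of false)⁻¹) ^ k = mk (W k) := by
  induction k with
  | zero => rfl
  | succ k ih =>
      rw [pow_succ', ih]
      have h1 : FreeGroup.of true = mk [(true, true)] := rfl
      have h2 : (FreeGroup.of false)⁻¹ = mk [(false, false)] := by
        have h0 : FreeGroup.of false = mk [(false, true)] := rfl
        rw [h0, inv_mk]; rfl
      rw [h1, h2, mul_mk, mul_mk]
      rfl

lemma toWord_pow (k : ℕ) :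
    ((FreeGroup.of true * (FreeGroup.of false)⁻¹) ^ k).toWord = W k := by
  rw [pow_eq_mk_W, toWord_mk, reduce_W]

lemma exists_list (k : ℕ) : ∃ l : List (FreeGroup Bool), l.length = 2 * k ∧
    (∀ a ∈ l, a ∈ M ∨ a⁻¹ ∈ M) ∧
    (FreeGroup.of true * (FreeGroup.of false)⁻¹) ^ k = l.prod := by
  induction k with
  | zero => exact ⟨[], rfl, by simp, by simp⟩
  | succ k ih =>
      obtain ⟨l, h1, h2, h3⟩ := ih
      refine ⟨FreeGroup.of true :: (FreeGroup.of false)⁻¹ :: l,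
        by simp only [List.length_cons, h1]; ring, ?_, ?_⟩
      · intro a ha
        simp only [List.mem_cons] at ha
        rcases ha with rfl | rfl | ha
        · exact Or.inl (Submonoid.subset_closure ⟨true, rfl⟩)
        · exact Or.inr (by rw [inv_inv]; exact Submonoid.subset_closure ⟨false, rfl⟩)
        · exact h2 a ha
      · rw [pow_succ', h3, List.prod_cons, List.prod_cons, mul_assoc]

lemma main (k : ℕ) :
    monoidDist M 1 ((FreeGroup.of true * (FreeGroup.of false)⁻¹) ^ k) = 2 * k := by
  set g := (FreeGroup.of true * (FreeGroup.of false)⁻¹) ^ k with hg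
  have hgw : g.toWord = W k := toWord_pow k
  obtain ⟨l₀, hlen₀, hmem₀, hprod₀⟩ := exists_list k
  have hS : (2 * k) ∈ {n : ℕ | ∃ l : List (FreeGroup Bool), l.length = n ∧
      (∀ a ∈ l, a ∈ M ∨ a⁻¹ ∈ M) ∧ (1 : FreeGroup Bool)⁻¹ * g = l.prod} :=
    ⟨l₀, hlen₀, hmem₀, by rw [inv_one, one_mul]; exact hprod₀⟩
  apply le_antisymm
  · exact Nat.sInf_le hS
  · obtain ⟨l, hlen, hl, hprod⟩ := Nat.sInf_mem (Set.nonempty_of_mem hS)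
    rw [inv_one, one_mul] at hprod
    have hb := blocks_prod l hl
    rw [← hprod, hgw, blocks_W] at hb
    calc 2 * k ≤ l.length := hb
    _ = monoidDist M 1 g := hlen

end MonoidDistAux

/-- In the free group on two generators `s, t` (here `s = FreeGroup.of true`,
`t = FreeGroup.of false`), with `M` the submonoid generated by `s` and `t`, the element
`(s t⁻¹)^k` is at monoid-distance exactly `2k` from the identity; in particular the monoid
Cayley graph has infinite diameter. -/
theorem freeGroup_monoidDist_st_inv_pow :
    (∀ k : ℕ, 1 ≤ k →
      monoidDist (Submonoid.closure (Set.range (FreeGroup.of : Bool → FreeGroup Bool))) 1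
        ((FreeGroup.of true * (FreeGroup.of false)⁻¹) ^ k) = 2 * k) ∧
    (∀ n : ℕ, ∃ g : FreeGroup Bool,
      n < monoidDist (Submonoid.closure (Set.range (FreeGroup.of : Bool → FreeGroup Bool)))
            1 g) := by
  constructor
  · intro k _
    exact MonoidDistAux.main k
  · intro n
    refine ⟨(FreeGroup.of true * (FreeGroup.of false)⁻¹) ^ (n + 1), ?_⟩
    have h := MonoidDistAux.main (n + 1)
    rw [h]
    omega
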